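/- arXiv:1606.05911 — 3 statements merged into one kernel-verified Lean document; each statement's English description precedes it below -/
import Mathlib

section
/- Let Γ ⊆ Aut(X₁,μ₁) × Aut(X₂,μ₂) be a countable group acting diagonally on the product probability space (X₁ × X₂, μ₁ ⊗ μ₂). If the action of Γ on the product has the property (T) relative to the space, then for each i ∈ {1,2}, the action of the projection π_i(Γ) on (X_i, μ_i) has the property (T) relative to the space. -/
open MeasureTheory Filter Topology

/-- **Ioana's criterion**: the action `act` of `Γ` on the probability space
`(X, μ)` has the property (T) relative to the space (is rigid) if for every
sequence of probability measures `ν n` on `X × X` whose both marginals are `μ`,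
which converges weakly to the diagonal pushforward of `μ` (tested against
bounded measurable functions), and which is asymptotically `Γ`-invariant in
total variation, one has `ν n (diagonal) → 1`. -/
def HasRelPropertyT {Γ X : Type*} [Group Γ] [MeasurableSpace X]
    (μ : Measure X) (act : Γ → X → X) : Prop :=
  ∀ ν : ℕ → Measure (X × X),
    (∀ n, IsProbabilityMeasure (ν n)) →
    (∀ n, (ν n).map Prod.fst = μ) →
    (∀ n, (ν n).map Prod.snd = μ) →
    (∀ φ ψ : X → ℝ, Measurable φ → Measurable ψ →
      (∃ C, ∀ x, |φ x| ≤ C) → (∃ C, ∀ x, |ψ x| ≤ C) →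
      Tendsto (fun n => ∫ p : X × X, φ p.1 * ψ p.2 ∂(ν n)) atTop
        (𝓝 (∫ x, φ x * ψ x ∂μ))) →
    (∀ γ : Γ, Tendsto (fun n => ⨆ s : Set (X × X),
        ((ν n).map (Prod.map (act γ) (act γ)) s - ν n s) +
          (ν n s - (ν n).map (Prod.map (act γ) (act γ)) s)) atTop (𝓝 0)) →
    Tendsto (fun n => ν n {p : X × X | p.1 = p.2}) atTop (𝓝 1)

open scoped ENNReal


lemma tsub_add_tsub_le' {a b c : ℝ≥0∞} (h1 : a - b ≤ c) (h2 : b - a ≤ c) :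
    (a - b) + (b - a) ≤ c := by
  rcases le_total a b with h | h
  · rw [tsub_eq_zero_of_le h, zero_add]; exact h2
  · rw [tsub_eq_zero_of_le h, add_zero]; exact h1

lemma integrable_of_bdd {α : Type*} [MeasurableSpace α] {μ : Measure α} [IsFiniteMeasure μ]
    {f : α → ℝ} (hf : Measurable f) {C : ℝ} (hC : ∀ x, |f x| ≤ C) : Integrable f μ :=
  ⟨hf.aestronglyMeasurable, HasFiniteIntegral.of_bounded
    (ae_of_all _ fun x => by simpa [Real.norm_eq_abs] using hC x)⟩

lemma map_sub_le {α β : Type*} [MeasurableSpace α] [MeasurableSpace β]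
    {ρ ρ' : Measure α} {f : α → β} (hf : Measurable f) {c : ℝ≥0∞}
    (hc : ∀ A : Set α, MeasurableSet A → ρ' A - ρ A ≤ c) (s : Set β) :
    ρ'.map f s - ρ.map f s ≤ c := by
  have hms : MeasurableSet (toMeasurable (ρ.map f) s) := measurableSet_toMeasurable _ _
  have h1 : ρ'.map f s ≤ ρ' (f ⁻¹' toMeasurable (ρ.map f) s) := by
    rw [← Measure.map_apply hf hms]; exact measure_mono (subset_toMeasurable _ _)
  have h2 : ρ.map f s = ρ (f ⁻¹' toMeasurable (ρ.map f) s) := by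
    rw [← Measure.map_apply hf hms, measure_toMeasurable]
  rw [h2]
  exact le_trans (tsub_le_tsub_right h1 _) (hc _ (hf hms))

lemma prod_sub_le_right {α β : Type*} [MeasurableSpace α] [MeasurableSpace β]
    {ρ ρ' : Measure α} [IsProbabilityMeasure ρ] [IsProbabilityMeasure ρ']
    (μ : Measure β) [IsProbabilityMeasure μ] {c : ℝ≥0∞}
    (hc : ∀ A : Set α, ρ' A - ρ A ≤ c) {B : Set (α × β)} (hB : MeasurableSet B) :
    ρ'.prod μ B - ρ.prod μ B ≤ c := by
  rw [Measure.prod_apply_symm hB, Measure.prod_apply_symm hB, tsub_le_iff_left]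
  calc ∫⁻ y, ρ' ((fun x => (x, y)) ⁻¹' B) ∂μ
      ≤ ∫⁻ y, (ρ ((fun x => (x, y)) ⁻¹' B) + c) ∂μ :=
        lintegral_mono fun y => by
          rw [← tsub_le_iff_left]; exact hc _
    _ = (∫⁻ y, ρ ((fun x => (x, y)) ⁻¹' B) ∂μ) + c := by
        rw [lintegral_add_right _ measurable_const, lintegral_const, measure_univ, mul_one]

lemma prod_sub_le_left {α β : Type*} [MeasurableSpace α] [MeasurableSpace β]
    {ρ ρ' : Measure β} [IsProbabilityMeasure ρ] [IsProbabilityMeasure ρ']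
    (μ : Measure α) [IsProbabilityMeasure μ] {c : ℝ≥0∞}
    (hc : ∀ A : Set β, ρ' A - ρ A ≤ c) {B : Set (α × β)} (hB : MeasurableSet B) :
    μ.prod ρ' B - μ.prod ρ B ≤ c := by
  rw [Measure.prod_apply hB, Measure.prod_apply hB, tsub_le_iff_left]
  calc ∫⁻ x, ρ' (Prod.mk x ⁻¹' B) ∂μ
      ≤ ∫⁻ x, (ρ (Prod.mk x ⁻¹' B) + c) ∂μ :=
        lintegral_mono fun x => by
          rw [← tsub_le_iff_left]; exact hc _
    _ = (∫⁻ x, ρ (Prod.mk x ⁻¹' B) ∂μ) + c := by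
        rw [lintegral_add_right _ measurable_const, lintegral_const, measure_univ, mul_one]

lemma nonempty_of_prob {α : Type*} [MeasurableSpace α] (μ : Measure α)
    [IsProbabilityMeasure μ] : Nonempty α := by
  rcases isEmpty_or_nonempty α with hE | hN
  · exfalso
    have h0 : μ Set.univ = 1 := measure_univ
    rw [Set.univ_eq_empty_iff.mpr hE, measure_empty] at h0
    exact zero_ne_one h0
  · exact hN


lemma aux₁ {Γ X₁ X₂ : Type*} [Group Γ] [MeasurableSpace X₁] [MeasurableSpace X₂]
    (μ₁ : Measure X₁) (μ₂ : Measure X₂)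
    [IsProbabilityMeasure μ₁] [IsProbabilityMeasure μ₂]
    (act₁ : Γ → X₁ → X₁) (act₂ : Γ → X₂ → X₂)
    (hm₁ : ∀ γ, Measurable (act₁ γ)) (hmp₂ : ∀ γ, MeasurePreserving (act₂ γ) μ₂ μ₂)
    (h : HasRelPropertyT (μ₁.prod μ₂)
      (fun γ (p : X₁ × X₂) => (act₁ γ p.1, act₂ γ p.2))) :
    HasRelPropertyT μ₁ act₁ := by
  intro ν hprob hfst hsnd hw hinv
  haveI := fun n => hprob n
  have hne1 : Nonempty X₁ := nonempty_of_prob μ₁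
  have hne2 : Nonempty X₂ := nonempty_of_prob μ₂
  set T : (X₁ × X₁) × X₂ → (X₁ × X₂) × (X₁ × X₂) :=
    fun q => ((q.1.1, q.2), (q.1.2, q.2)) with hT
  have hTm : Measurable T := by fun_prop
  set νt : ℕ → Measure ((X₁ × X₂) × (X₁ × X₂)) :=
    fun n => ((ν n).prod μ₂).map T with hνt
  haveI hprob' : ∀ n, IsProbabilityMeasure (νt n) := fun n =>
    Measure.isProbabilityMeasure_map hTm.aemeasurable
  -- marginals
  have hfst' : ∀ n, (νt n).map Prod.fst = μ₁.prod μ₂ := by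
    intro n
    rw [hνt, Measure.map_map measurable_fst hTm]
    have he : (Prod.fst ∘ T) = Prod.map (Prod.fst : X₁ × X₁ → X₁) (id : X₂ → X₂) := rfl
    rw [he, ← Measure.map_prod_map _ _ measurable_fst measurable_id, hfst n, Measure.map_id]
  have hsnd' : ∀ n, (νt n).map Prod.snd = μ₁.prod μ₂ := by
    intro n
    rw [hνt, Measure.map_map measurable_snd hTm]
    have he : (Prod.snd ∘ T) = Prod.map (Prod.snd : X₁ × X₁ → X₁) (id : X₂ → X₂) := rfl
    rw [he, ← Measure.map_prod_map _ _ measurable_snd measurable_id, hsnd n, Measure.map_id]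
  -- weak convergence
  have hw' : ∀ φ ψ : X₁ × X₂ → ℝ, Measurable φ → Measurable ψ →
      (∃ C, ∀ x, |φ x| ≤ C) → (∃ C, ∀ x, |ψ x| ≤ C) →
      Tendsto (fun n => ∫ p : (X₁ × X₂) × (X₁ × X₂), φ p.1 * ψ p.2 ∂(νt n)) atTop
        (𝓝 (∫ x, φ x * ψ x ∂(μ₁.prod μ₂))) := by
    rintro φ ψ hφ hψ ⟨Cφ, hCφ⟩ ⟨Cψ, hCψ⟩
    obtain ⟨x₀⟩ := hne1
    obtain ⟨z₀⟩ := hne2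
    have hCφ0 : 0 ≤ Cφ := le_trans (abs_nonneg _) (hCφ (x₀, z₀))
    have hCψ0 : 0 ≤ Cψ := le_trans (abs_nonneg _) (hCψ (x₀, z₀))
    have hbdd : ∀ q : (X₁ × X₁) × X₂, |φ (T q).1 * ψ (T q).2| ≤ Cφ * Cψ := fun q => by
      rw [abs_mul]; exact mul_le_mul (hCφ _) (hCψ _) (abs_nonneg _) hCφ0
    have hmeas : Measurable fun q : (X₁ × X₁) × X₂ => φ (T q).1 * ψ (T q).2 :=
      (hφ.comp ((measurable_fst.fst).prodMk measurable_snd)).mul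
        (hψ.comp ((measurable_fst.snd).prodMk measurable_snd))
    have hInt : ∀ n, Integrable (fun q : (X₁ × X₁) × X₂ => φ (T q).1 * ψ (T q).2)
        ((ν n).prod μ₂) := fun n => integrable_of_bdd hmeas hbdd
    have hbdd2 : ∀ p : X₁ × X₂, |φ p * ψ p| ≤ Cφ * Cψ := fun p => by
      rw [abs_mul]; exact mul_le_mul (hCφ _) (hCψ _) (abs_nonneg _) hCφ0
    have hmeas2 : Measurable fun p : X₁ × X₂ => φ p * ψ p := hφ.mul hψ
    have key : ∀ n, ∫ p : (X₁ × X₂) × (X₁ × X₂), φ p.1 * ψ p.2 ∂(νt n)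
        = ∫ z, ∫ w : X₁ × X₁, φ (w.1, z) * ψ (w.2, z) ∂(ν n) ∂μ₂ := by
      intro n
      calc ∫ p : (X₁ × X₂) × (X₁ × X₂), φ p.1 * ψ p.2 ∂(νt n)
          = ∫ q : (X₁ × X₁) × X₂, φ (T q).1 * ψ (T q).2 ∂((ν n).prod μ₂) := by
            rw [hνt]
            exact integral_map hTm.aemeasurable
              ((hφ.comp measurable_fst).mul (hψ.comp measurable_snd)).aestronglyMeasurable
        _ = ∫ z, ∫ w : X₁ × X₁, φ (w.1, z) * ψ (w.2, z) ∂(ν n) ∂μ₂ :=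
            integral_prod_symm _ (hInt n)
    have htarget : ∫ x, φ x * ψ x ∂(μ₁.prod μ₂)
        = ∫ z, ∫ x, φ (x, z) * ψ (x, z) ∂μ₁ ∂μ₂ :=
      integral_prod_symm _ (integrable_of_bdd hmeas2 hbdd2)
    rw [htarget]
    simp_rw [key]
    apply tendsto_integral_of_dominated_convergence (bound := fun _ => Cφ * Cψ)
    · intro n
      exact (hmeas.stronglyMeasurable.integral_prod_left').aestronglyMeasurable
    · exact integrable_const _
    · intro n
      refine ae_of_all _ fun z => ?_
      have := norm_integral_le_of_norm_le_const
        (μ := ν n) (f := fun w : X₁ × X₁ => φ (w.1, z) * ψ (w.2, z)) (C := Cφ * Cψ)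
        (ae_of_all _ fun w => by
          simpa [Real.norm_eq_abs, abs_mul] using hbdd ((w.1, w.2), z))
      simpa [measure_univ] using this
    · refine ae_of_all _ fun z => ?_
      exact hw (fun x => φ (x, z)) (fun x => ψ (x, z))
        (hφ.comp (measurable_id.prodMk measurable_const))
        (hψ.comp (measurable_id.prodMk measurable_const))
        ⟨Cφ, fun x => hCφ _⟩ ⟨Cψ, fun x => hCψ _⟩
  -- asymptotic invariance
  have hinv' : ∀ γ : Γ, Tendsto (fun n => ⨆ s : Set ((X₁ × X₂) × (X₁ × X₂)),
      ((νt n).map (Prod.map (fun p : X₁ × X₂ => (act₁ γ p.1, act₂ γ p.2))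
          (fun p : X₁ × X₂ => (act₁ γ p.1, act₂ γ p.2))) s - νt n s) +
        (νt n s - (νt n).map (Prod.map (fun p : X₁ × X₂ => (act₁ γ p.1, act₂ γ p.2))
          (fun p : X₁ × X₂ => (act₁ γ p.1, act₂ γ p.2))) s)) atTop (𝓝 0) := by
    intro γ
    have hDm : Measurable (Prod.map (fun p : X₁ × X₂ => (act₁ γ p.1, act₂ γ p.2))
        (fun p : X₁ × X₂ => (act₁ γ p.1, act₂ γ p.2))) := by
      have : Measurable fun p : X₁ × X₂ => (act₁ γ p.1, act₂ γ p.2) :=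
        ((hm₁ γ).comp measurable_fst).prodMk ((hmp₂ γ).measurable.comp measurable_snd)
      exact this.prodMap this
    have hS1m : Measurable (Prod.map (act₁ γ) (act₁ γ)) := (hm₁ γ).prodMap (hm₁ γ)
    haveI : ∀ n, IsProbabilityMeasure ((ν n).map (Prod.map (act₁ γ) (act₁ γ))) := fun n =>
      Measure.isProbabilityMeasure_map hS1m.aemeasurable
    have hid : ∀ n, (νt n).map (Prod.map (fun p : X₁ × X₂ => (act₁ γ p.1, act₂ γ p.2))
        (fun p : X₁ × X₂ => (act₁ γ p.1, act₂ γ p.2)))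
        = (((ν n).map (Prod.map (act₁ γ) (act₁ γ))).prod μ₂).map T := by
      intro n
      rw [hνt, Measure.map_map hDm hTm]
      have h2 : (((ν n).map (Prod.map (act₁ γ) (act₁ γ))).prod μ₂)
          = ((ν n).prod μ₂).map (Prod.map (Prod.map (act₁ γ) (act₁ γ)) (act₂ γ)) := by
        conv_lhs => rw [← (hmp₂ γ).map_eq]
        exact Measure.map_prod_map _ _ hS1m (hmp₂ γ).measurable
      rw [h2, Measure.map_map hTm (hS1m.prodMap (hmp₂ γ).measurable)]
      congr 1
    refine tendsto_of_tendsto_of_tendsto_of_le_of_le tendsto_const_nhds (hinv γ)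
      (fun n => zero_le) (fun n => ?_)
    refine iSup_le fun s => tsub_add_tsub_le' ?_ ?_
    · rw [hid n, hνt]
      refine map_sub_le hTm (fun B hB => ?_) s
      refine prod_sub_le_right μ₂ (fun A => ?_) hB
      refine le_trans le_self_add (le_iSup (fun s : Set (X₁ × X₁) =>
        ((ν n).map (Prod.map (act₁ γ) (act₁ γ)) s - ν n s) +
          (ν n s - (ν n).map (Prod.map (act₁ γ) (act₁ γ)) s)) A)
    · rw [hid n, hνt]
      refine map_sub_le hTm (fun B hB => ?_) s
      refine prod_sub_le_right μ₂ (fun A => ?_) hB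
      refine le_trans le_add_self (le_iSup (fun s : Set (X₁ × X₁) =>
        ((ν n).map (Prod.map (act₁ γ) (act₁ γ)) s - ν n s) +
          (ν n s - (ν n).map (Prod.map (act₁ γ) (act₁ γ)) s)) A)
  -- diagonal
  have hdiag : ∀ n, νt n {p : (X₁ × X₂) × (X₁ × X₂) | p.1 = p.2}
      ≤ ν n {p : X₁ × X₁ | p.1 = p.2} := by
    intro n
    set B := toMeasurable (ν n) {p : X₁ × X₁ | p.1 = p.2} with hB
    have hBm : MeasurableSet B := measurableSet_toMeasurable _ _
    have hm : Measurable fun p : (X₁ × X₂) × (X₁ × X₂) => (p.1.1, p.2.1) :=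
      (measurable_fst.fst).prodMk (measurable_snd.fst)
    have hsub : {p : (X₁ × X₂) × (X₁ × X₂) | p.1 = p.2}
        ⊆ (fun p : (X₁ × X₂) × (X₁ × X₂) => (p.1.1, p.2.1)) ⁻¹' B := by
      intro p hp
      have hp' : p.1 = p.2 := hp
      apply subset_toMeasurable
      show p.1.1 = p.2.1
      rw [hp']
    calc νt n {p : (X₁ × X₂) × (X₁ × X₂) | p.1 = p.2}
        ≤ νt n ((fun p : (X₁ × X₂) × (X₁ × X₂) => (p.1.1, p.2.1)) ⁻¹' B) :=
          measure_mono hsub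
      _ = ((ν n).prod μ₂) (T ⁻¹' ((fun p : (X₁ × X₂) × (X₁ × X₂) => (p.1.1, p.2.1)) ⁻¹' B)) := by
          rw [hνt]; exact Measure.map_apply hTm (hm hBm)
      _ = ((ν n).prod μ₂) (B ×ˢ (Set.univ : Set X₂)) := by
          congr 1
          ext ⟨⟨x, y⟩, z⟩
          simp [hT]
      _ = ν n B * μ₂ Set.univ := Measure.prod_prod _ _
      _ = ν n {p : X₁ × X₁ | p.1 = p.2} := by
          rw [measure_univ, mul_one, hB, measure_toMeasurable]
  have hmain := h νt hprob' hfst' hsnd' hw' hinv'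
  refine tendsto_of_tendsto_of_tendsto_of_le_of_le hmain tendsto_const_nhds
    (fun n => hdiag n) (fun n => prob_le_one)

lemma aux₂ {Γ X₁ X₂ : Type*} [Group Γ] [MeasurableSpace X₁] [MeasurableSpace X₂]
    (μ₁ : Measure X₁) (μ₂ : Measure X₂)
    [IsProbabilityMeasure μ₁] [IsProbabilityMeasure μ₂]
    (act₁ : Γ → X₁ → X₁) (act₂ : Γ → X₂ → X₂)
    (hmp₁ : ∀ γ, MeasurePreserving (act₁ γ) μ₁ μ₁) (hm₂ : ∀ γ, Measurable (act₂ γ))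
    (h : HasRelPropertyT (μ₁.prod μ₂)
      (fun γ (p : X₁ × X₂) => (act₁ γ p.1, act₂ γ p.2))) :
    HasRelPropertyT μ₂ act₂ := by
  intro ν hprob hfst hsnd hw hinv
  haveI := fun n => hprob n
  have hne1 : Nonempty X₁ := nonempty_of_prob μ₁
  have hne2 : Nonempty X₂ := nonempty_of_prob μ₂
  set T : X₁ × (X₂ × X₂) → (X₁ × X₂) × (X₁ × X₂) :=
    fun q => ((q.1, q.2.1), (q.1, q.2.2)) with hT
  have hTm : Measurable T := by fun_prop
  set νt : ℕ → Measure ((X₁ × X₂) × (X₁ × X₂)) :=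
    fun n => (μ₁.prod (ν n)).map T with hνt
  haveI hprob' : ∀ n, IsProbabilityMeasure (νt n) := fun n =>
    Measure.isProbabilityMeasure_map hTm.aemeasurable
  -- marginals
  have hfst' : ∀ n, (νt n).map Prod.fst = μ₁.prod μ₂ := by
    intro n
    rw [hνt, Measure.map_map measurable_fst hTm]
    have he : (Prod.fst ∘ T) = Prod.map (id : X₁ → X₁) (Prod.fst : X₂ × X₂ → X₂) := rfl
    rw [he, ← Measure.map_prod_map _ _ measurable_id measurable_fst, hfst n, Measure.map_id]
  have hsnd' : ∀ n, (νt n).map Prod.snd = μ₁.prod μ₂ := by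
    intro n
    rw [hνt, Measure.map_map measurable_snd hTm]
    have he : (Prod.snd ∘ T) = Prod.map (id : X₁ → X₁) (Prod.snd : X₂ × X₂ → X₂) := rfl
    rw [he, ← Measure.map_prod_map _ _ measurable_id measurable_snd, hsnd n, Measure.map_id]
  -- weak convergence
  have hw' : ∀ φ ψ : X₁ × X₂ → ℝ, Measurable φ → Measurable ψ →
      (∃ C, ∀ x, |φ x| ≤ C) → (∃ C, ∀ x, |ψ x| ≤ C) →
      Tendsto (fun n => ∫ p : (X₁ × X₂) × (X₁ × X₂), φ p.1 * ψ p.2 ∂(νt n)) atTop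
        (𝓝 (∫ x, φ x * ψ x ∂(μ₁.prod μ₂))) := by
    rintro φ ψ hφ hψ ⟨Cφ, hCφ⟩ ⟨Cψ, hCψ⟩
    obtain ⟨x₀⟩ := hne1
    obtain ⟨z₀⟩ := hne2
    have hCφ0 : 0 ≤ Cφ := le_trans (abs_nonneg _) (hCφ (x₀, z₀))
    have hbdd : ∀ q : X₁ × (X₂ × X₂), |φ (T q).1 * ψ (T q).2| ≤ Cφ * Cψ := fun q => by
      rw [abs_mul]; exact mul_le_mul (hCφ _) (hCψ _) (abs_nonneg _) hCφ0
    have hmeas : Measurable fun q : X₁ × (X₂ × X₂) => φ (T q).1 * ψ (T q).2 :=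
      (hφ.comp (measurable_fst.prodMk measurable_snd.fst)).mul
        (hψ.comp (measurable_fst.prodMk measurable_snd.snd))
    have hInt : ∀ n, Integrable (fun q : X₁ × (X₂ × X₂) => φ (T q).1 * ψ (T q).2)
        (μ₁.prod (ν n)) := fun n => integrable_of_bdd hmeas hbdd
    have hbdd2 : ∀ p : X₁ × X₂, |φ p * ψ p| ≤ Cφ * Cψ := fun p => by
      rw [abs_mul]; exact mul_le_mul (hCφ _) (hCψ _) (abs_nonneg _) hCφ0
    have hmeas2 : Measurable fun p : X₁ × X₂ => φ p * ψ p := hφ.mul hψ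
    have key : ∀ n, ∫ p : (X₁ × X₂) × (X₁ × X₂), φ p.1 * ψ p.2 ∂(νt n)
        = ∫ x, ∫ w : X₂ × X₂, φ (x, w.1) * ψ (x, w.2) ∂(ν n) ∂μ₁ := by
      intro n
      calc ∫ p : (X₁ × X₂) × (X₁ × X₂), φ p.1 * ψ p.2 ∂(νt n)
          = ∫ q : X₁ × (X₂ × X₂), φ (T q).1 * ψ (T q).2 ∂(μ₁.prod (ν n)) := by
            rw [hνt]
            exact integral_map hTm.aemeasurable
              ((hφ.comp measurable_fst).mul (hψ.comp measurable_snd)).aestronglyMeasurable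
        _ = ∫ x, ∫ w : X₂ × X₂, φ (x, w.1) * ψ (x, w.2) ∂(ν n) ∂μ₁ :=
            integral_prod _ (hInt n)
    have htarget : ∫ x, φ x * ψ x ∂(μ₁.prod μ₂)
        = ∫ x, ∫ z, φ (x, z) * ψ (x, z) ∂μ₂ ∂μ₁ :=
      integral_prod _ (integrable_of_bdd hmeas2 hbdd2)
    rw [htarget]
    simp_rw [key]
    apply tendsto_integral_of_dominated_convergence (bound := fun _ => Cφ * Cψ)
    · intro n
      exact (hmeas.stronglyMeasurable.integral_prod_right').aestronglyMeasurable
    · exact integrable_const _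
    · intro n
      refine ae_of_all _ fun x => ?_
      have := norm_integral_le_of_norm_le_const
        (μ := ν n) (f := fun w : X₂ × X₂ => φ (x, w.1) * ψ (x, w.2)) (C := Cφ * Cψ)
        (ae_of_all _ fun w => by
          simpa [Real.norm_eq_abs, abs_mul] using hbdd (x, (w.1, w.2)))
      simpa [measure_univ] using this
    · refine ae_of_all _ fun x => ?_
      exact hw (fun z => φ (x, z)) (fun z => ψ (x, z))
        (hφ.comp (measurable_const.prodMk measurable_id))
        (hψ.comp (measurable_const.prodMk measurable_id))
        ⟨Cφ, fun z => hCφ _⟩ ⟨Cψ, fun z => hCψ _⟩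
  -- asymptotic invariance
  have hinv' : ∀ γ : Γ, Tendsto (fun n => ⨆ s : Set ((X₁ × X₂) × (X₁ × X₂)),
      ((νt n).map (Prod.map (fun p : X₁ × X₂ => (act₁ γ p.1, act₂ γ p.2))
          (fun p : X₁ × X₂ => (act₁ γ p.1, act₂ γ p.2))) s - νt n s) +
        (νt n s - (νt n).map (Prod.map (fun p : X₁ × X₂ => (act₁ γ p.1, act₂ γ p.2))
          (fun p : X₁ × X₂ => (act₁ γ p.1, act₂ γ p.2))) s)) atTop (𝓝 0) := by
    intro γ
    have hDm : Measurable (Prod.map (fun p : X₁ × X₂ => (act₁ γ p.1, act₂ γ p.2))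
        (fun p : X₁ × X₂ => (act₁ γ p.1, act₂ γ p.2))) := by
      have : Measurable fun p : X₁ × X₂ => (act₁ γ p.1, act₂ γ p.2) :=
        ((hmp₁ γ).measurable.comp measurable_fst).prodMk ((hm₂ γ).comp measurable_snd)
      exact this.prodMap this
    have hS2m : Measurable (Prod.map (act₂ γ) (act₂ γ)) := (hm₂ γ).prodMap (hm₂ γ)
    haveI : ∀ n, IsProbabilityMeasure ((ν n).map (Prod.map (act₂ γ) (act₂ γ))) := fun n =>
      Measure.isProbabilityMeasure_map hS2m.aemeasurable
    have hid : ∀ n, (νt n).map (Prod.map (fun p : X₁ × X₂ => (act₁ γ p.1, act₂ γ p.2))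
        (fun p : X₁ × X₂ => (act₁ γ p.1, act₂ γ p.2)))
        = (μ₁.prod ((ν n).map (Prod.map (act₂ γ) (act₂ γ)))).map T := by
      intro n
      rw [hνt, Measure.map_map hDm hTm]
      have h2 : (μ₁.prod ((ν n).map (Prod.map (act₂ γ) (act₂ γ))))
          = (μ₁.prod (ν n)).map (Prod.map (act₁ γ) (Prod.map (act₂ γ) (act₂ γ))) := by
        conv_lhs => rw [← (hmp₁ γ).map_eq]
        exact Measure.map_prod_map _ _ (hmp₁ γ).measurable hS2m
      rw [h2, Measure.map_map hTm ((hmp₁ γ).measurable.prodMap hS2m)]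
      congr 1
    refine tendsto_of_tendsto_of_tendsto_of_le_of_le tendsto_const_nhds (hinv γ)
      (fun n => zero_le) (fun n => ?_)
    refine iSup_le fun s => tsub_add_tsub_le' ?_ ?_
    · rw [hid n, hνt]
      refine map_sub_le hTm (fun B hB => ?_) s
      refine prod_sub_le_left μ₁ (fun A => ?_) hB
      refine le_trans le_self_add (le_iSup (fun s : Set (X₂ × X₂) =>
        ((ν n).map (Prod.map (act₂ γ) (act₂ γ)) s - ν n s) +
          (ν n s - (ν n).map (Prod.map (act₂ γ) (act₂ γ)) s)) A)
    · rw [hid n, hνt]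
      refine map_sub_le hTm (fun B hB => ?_) s
      refine prod_sub_le_left μ₁ (fun A => ?_) hB
      refine le_trans le_add_self (le_iSup (fun s : Set (X₂ × X₂) =>
        ((ν n).map (Prod.map (act₂ γ) (act₂ γ)) s - ν n s) +
          (ν n s - (ν n).map (Prod.map (act₂ γ) (act₂ γ)) s)) A)
  -- diagonal
  have hdiag : ∀ n, νt n {p : (X₁ × X₂) × (X₁ × X₂) | p.1 = p.2}
      ≤ ν n {p : X₂ × X₂ | p.1 = p.2} := by
    intro n
    set B := toMeasurable (ν n) {p : X₂ × X₂ | p.1 = p.2} with hB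
    have hBm : MeasurableSet B := measurableSet_toMeasurable _ _
    have hm : Measurable fun p : (X₁ × X₂) × (X₁ × X₂) => (p.1.2, p.2.2) :=
      (measurable_fst.snd).prodMk (measurable_snd.snd)
    have hsub : {p : (X₁ × X₂) × (X₁ × X₂) | p.1 = p.2}
        ⊆ (fun p : (X₁ × X₂) × (X₁ × X₂) => (p.1.2, p.2.2)) ⁻¹' B := by
      intro p hp
      have hp' : p.1 = p.2 := hp
      apply subset_toMeasurable
      show p.1.2 = p.2.2
      rw [hp']
    calc νt n {p : (X₁ × X₂) × (X₁ × X₂) | p.1 = p.2}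
        ≤ νt n ((fun p : (X₁ × X₂) × (X₁ × X₂) => (p.1.2, p.2.2)) ⁻¹' B) :=
          measure_mono hsub
      _ = (μ₁.prod (ν n)) (T ⁻¹' ((fun p : (X₁ × X₂) × (X₁ × X₂) => (p.1.2, p.2.2)) ⁻¹' B)) := by
          rw [hνt]; exact Measure.map_apply hTm (hm hBm)
      _ = (μ₁.prod (ν n)) ((Set.univ : Set X₁) ×ˢ B) := by
          congr 1
          ext ⟨x, ⟨y, z⟩⟩
          simp [hT]
      _ = μ₁ Set.univ * ν n B := Measure.prod_prod _ _
      _ = ν n {p : X₂ × X₂ | p.1 = p.2} := by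
          rw [measure_univ, one_mul, hB, measure_toMeasurable]
  have hmain := h νt hprob' hfst' hsnd' hw' hinv'
  refine tendsto_of_tendsto_of_tendsto_of_le_of_le hmain tendsto_const_nhds
    (fun n => hdiag n) (fun n => prob_le_one)

/-- If the diagonal action of `Γ ⊆ Aut(X₁,μ₁) × Aut(X₂,μ₂)` on the product
probability space has the property (T) relative to the space, then so do the
actions of the two projections of `Γ` on each factor. -/
theorem relPropertyT_factors_of_prod {Γ X₁ X₂ : Type*} [Group Γ]
    [MeasurableSpace X₁] [MeasurableSpace X₂]
    (μ₁ : Measure X₁) (μ₂ : Measure X₂)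
    [IsProbabilityMeasure μ₁] [IsProbabilityMeasure μ₂]
    (act₁ : Γ → X₁ → X₁) (act₂ : Γ → X₂ → X₂)
    (hone₁ : ∀ x, act₁ 1 x = x) (hmul₁ : ∀ γ γ' x, act₁ (γ * γ') x = act₁ γ (act₁ γ' x))
    (hone₂ : ∀ x, act₂ 1 x = x) (hmul₂ : ∀ γ γ' x, act₂ (γ * γ') x = act₂ γ (act₂ γ' x))
    (hmp₁ : ∀ γ, MeasurePreserving (act₁ γ) μ₁ μ₁)
    (hmp₂ : ∀ γ, MeasurePreserving (act₂ γ) μ₂ μ₂)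
    (h : HasRelPropertyT (μ₁.prod μ₂)
      (fun γ (p : X₁ × X₂) => (act₁ γ p.1, act₂ γ p.2))) :
    HasRelPropertyT μ₁ act₁ ∧ HasRelPropertyT μ₂ act₂ :=
  ⟨aux₁ μ₁ μ₂ act₁ act₂ (fun γ => (hmp₁ γ).measurable) hmp₂ h,
   aux₂ μ₁ μ₂ act₁ act₂ hmp₁ (fun γ => (hmp₂ γ).measurable) h⟩
end

section
/- Let Γ ⊆ Aut(X₁,μ₁) × Aut(X₂,μ₂) be a countable group. If for i = 1, 2 the actions of the projections π_i(Γ) on (X_i, μ_i) have the property (T) relative to the space, then the diagonal action of Γ on (X₁ × X₂, μ₁ ⊗ μ₂) has the property (T) relative to the space. -/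
open MeasureTheory Filter Topology

section AuxSep

variable {X₁ X₂ : Type*} [m₁ : MeasurableSpace X₁] [m₂ : MeasurableSpace X₂]

private def SepProp (S : Set ((X₁ × X₂) × (X₁ × X₂))) : Prop :=
  ∃ (a : ℕ → Set X₁) (b : ℕ → Set X₂),
    (∀ n, MeasurableSet (a n)) ∧ (∀ n, MeasurableSet (b n)) ∧
    ∀ u v : X₁ × X₂, (∀ n, u.1 ∈ a n ↔ v.1 ∈ a n) → (∀ n, u.2 ∈ b n ↔ v.2 ∈ b n) →
      ((u, v) ∈ S ↔ (u, u) ∈ S)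

private lemma sepProp_empty : SepProp (∅ : Set ((X₁ × X₂) × (X₁ × X₂))) :=
  ⟨fun _ => ∅, fun _ => ∅, fun _ => MeasurableSet.empty, fun _ => MeasurableSet.empty,
    fun _ _ _ _ => Iff.rfl⟩

private lemma sepProp_compl {S : Set ((X₁ × X₂) × (X₁ × X₂))} (h : SepProp S) : SepProp Sᶜ := by
  obtain ⟨a, b, ha, hb, h⟩ := h
  exact ⟨a, b, ha, hb, fun u v h1 h2 => (h u v h1 h2).not⟩

private lemma sepProp_iUnion {f : ℕ → Set ((X₁ × X₂) × (X₁ × X₂))} (h : ∀ i, SepProp (f i)) :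
    SepProp (⋃ i, f i) := by
  choose a b ha hb h using h
  refine ⟨fun k => a k.unpair.1 k.unpair.2, fun k => b k.unpair.1 k.unpair.2,
    fun k => ha _ _, fun k => hb _ _, fun u v h1 h2 => ?_⟩
  simp only [Set.mem_iUnion]
  exact exists_congr fun i => h i u v
    (fun n => by simpa [Nat.unpair_pair] using h1 (Nat.pair i n))
    (fun n => by simpa [Nat.unpair_pair] using h2 (Nat.pair i n))

private lemma sepProp_of_measurableSet (S : Set ((X₁ × X₂) × (X₁ × X₂)))
    (hS : MeasurableSet S) : SepProp S := by
  let m' : MeasurableSpace ((X₁ × X₂) × (X₁ × X₂)) :=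
    { MeasurableSet' := SepProp
      measurableSet_empty := sepProp_empty
      measurableSet_compl := fun _ h => sepProp_compl h
      measurableSet_iUnion := fun _ h => sepProp_iUnion h }
  have hle : (Prod.instMeasurableSpace : MeasurableSpace ((X₁ × X₂) × (X₁ × X₂))) ≤ m' := by
    have heq : (Prod.instMeasurableSpace : MeasurableSpace ((X₁ × X₂) × (X₁ × X₂)))
        = (MeasurableSpace.comap (Prod.fst ∘ Prod.fst) m₁
            ⊔ MeasurableSpace.comap (Prod.snd ∘ Prod.fst) m₂)
          ⊔ (MeasurableSpace.comap (Prod.fst ∘ Prod.snd) m₁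
            ⊔ MeasurableSpace.comap (Prod.snd ∘ Prod.snd) m₂) := by
      rw [show (Prod.instMeasurableSpace : MeasurableSpace ((X₁ × X₂) × (X₁ × X₂)))
          = MeasurableSpace.comap Prod.fst
              (m₁.comap Prod.fst ⊔ m₂.comap Prod.snd)
            ⊔ MeasurableSpace.comap Prod.snd
              (m₁.comap Prod.fst ⊔ m₂.comap Prod.snd) from rfl]
      rw [MeasurableSpace.comap_sup, MeasurableSpace.comap_sup,
        MeasurableSpace.comap_comp, MeasurableSpace.comap_comp,
        MeasurableSpace.comap_comp, MeasurableSpace.comap_comp]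
    rw [heq]
    have gen : ∀ t : Set ((X₁ × X₂) × (X₁ × X₂)), True := fun _ => trivial
    clear gen
    refine sup_le (sup_le ?_ ?_) (sup_le ?_ ?_) <;>
      refine MeasurableSpace.le_def.mpr fun t ht => ?_ <;>
      obtain ⟨A, hA, rfl⟩ := MeasurableSpace.measurableSet_comap.mp ht
    · exact ⟨fun _ => A, fun _ => ∅, fun _ => hA, fun _ => MeasurableSet.empty,
        fun u v h1 h2 => Iff.rfl⟩
    · exact ⟨fun _ => ∅, fun _ => A, fun _ => MeasurableSet.empty, fun _ => hA,
        fun u v h1 h2 => Iff.rfl⟩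
    · exact ⟨fun _ => A, fun _ => ∅, fun _ => hA, fun _ => MeasurableSet.empty,
        fun u v h1 h2 => (h1 0).symm⟩
    · exact ⟨fun _ => ∅, fun _ => A, fun _ => MeasurableSet.empty, fun _ => hA,
        fun u v h1 h2 => (h2 0).symm⟩
  exact MeasurableSpace.le_def.mp hle S hS

private lemma exists_sep (S : Set ((X₁ × X₂) × (X₁ × X₂))) (hS : MeasurableSet S) :
    ∃ (a : ℕ → Set X₁) (b : ℕ → Set X₂),
      (∀ n, MeasurableSet (a n)) ∧ (∀ n, MeasurableSet (b n)) ∧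
      ∀ u v : X₁ × X₂, (∀ n, u.1 ∈ a n ↔ v.1 ∈ a n) → (∀ n, u.2 ∈ b n ↔ v.2 ∈ b n) →
        ((u, v) ∈ S ↔ (u, u) ∈ S) :=
  sepProp_of_measurableSet S hS

end AuxSep

section AuxMeasure

open MeasureTheory

private lemma map_tv_le {W Y : Type*} [MeasurableSpace W] [MeasurableSpace Y]
    (ρ σ : Measure W) {f : W → Y} (hf : Measurable f) (s : Set Y) :
    ρ.map f s - σ.map f s ≤ ⨆ u : Set W, (ρ u - σ u) + (σ u - ρ u) := by
  rw [tsub_le_iff_right]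
  calc ρ.map f s ≤ ρ.map f (toMeasurable (σ.map f) s) :=
        measure_mono (subset_toMeasurable _ _)
    _ = ρ (f ⁻¹' toMeasurable (σ.map f) s) :=
        Measure.map_apply hf (measurableSet_toMeasurable _ _)
    _ ≤ (ρ (f ⁻¹' toMeasurable (σ.map f) s) - σ (f ⁻¹' toMeasurable (σ.map f) s))
        + σ (f ⁻¹' toMeasurable (σ.map f) s) := le_tsub_add
    _ ≤ (⨆ u : Set W, (ρ u - σ u) + (σ u - ρ u)) + σ (f ⁻¹' toMeasurable (σ.map f) s) := by
        refine add_le_add_left ?_ _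
        exact le_trans (self_le_add_right _ _)
          (le_iSup (fun u => (ρ u - σ u) + (σ u - ρ u)) (f ⁻¹' toMeasurable (σ.map f) s))
    _ = (⨆ u : Set W, (ρ u - σ u) + (σ u - ρ u)) + σ.map f (toMeasurable (σ.map f) s) := by
        rw [Measure.map_apply hf (measurableSet_toMeasurable _ _)]
    _ = (⨆ u : Set W, (ρ u - σ u) + (σ u - ρ u)) + σ.map f s := by
        rw [measure_toMeasurable]

private lemma inv_transfer {W Y ι : Type*} [MeasurableSpace W] [MeasurableSpace Y]
    {l : Filter ι} {ν : ι → Measure W} {f : W → Y} (hf : Measurable f)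
    {F : W → W} {G : Y → Y}
    (h : Filter.Tendsto (fun n => ⨆ s : Set W,
        ((ν n).map F s - ν n s) + (ν n s - (ν n).map F s)) l (nhds 0))
    (hF : Measurable F) (hG : Measurable G)
    (hcomm : ∀ w, f (F w) = G (f w)) :
    Filter.Tendsto (fun n => ⨆ s : Set Y,
        (((ν n).map f).map G s - (ν n).map f s)
          + ((ν n).map f s - ((ν n).map f).map G s)) l (nhds 0) := by
  have key : ∀ n, (⨆ s : Set Y, (((ν n).map f).map G s - (ν n).map f s)
      + ((ν n).map f s - ((ν n).map f).map G s))
      ≤ (⨆ u : Set W, ((ν n).map F u - ν n u) + (ν n u - (ν n).map F u))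
      + (⨆ u : Set W, ((ν n).map F u - ν n u) + (ν n u - (ν n).map F u)) := by
    intro n
    have hmap : ((ν n).map f).map G = ((ν n).map F).map f := by
      rw [Measure.map_map hG hf, Measure.map_map hf hF]
      congr 1
      exact funext fun w => (hcomm w).symm
    refine iSup_le fun s => ?_
    rw [hmap]
    have h1 := map_tv_le ((ν n).map F) (ν n) hf s
    have h2 := map_tv_le (ν n) ((ν n).map F) hf s
    have h2' : (⨆ u : Set W, (ν n u - (ν n).map F u) + ((ν n).map F u - ν n u))
        = ⨆ u : Set W, ((ν n).map F u - ν n u) + (ν n u - (ν n).map F u) :=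
      iSup_congr fun u => add_comm _ _
    rw [h2'] at h2
    exact add_le_add h1 h2
  have h0 : Filter.Tendsto (fun n =>
      (⨆ u : Set W, ((ν n).map F u - ν n u) + (ν n u - (ν n).map F u))
      + (⨆ u : Set W, ((ν n).map F u - ν n u) + (ν n u - (ν n).map F u))) l (nhds 0) := by
    simpa using h.add h
  exact tendsto_of_tendsto_of_tendsto_of_le_of_le tendsto_const_nhds h0
    (fun n => zero_le) key

end AuxMeasure

section PseudoDiag

private def pseudoDiag {X : Type*} (c : ℕ → Set X) : Set (X × X) :=
  ⋂ k, {q | q.1 ∈ c k ↔ q.2 ∈ c k}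

private lemma mem_pseudoDiag {X : Type*} {c : ℕ → Set X} {q : X × X} :
    q ∈ pseudoDiag c ↔ ∀ k, (q.1 ∈ c k ↔ q.2 ∈ c k) := by
  simp [pseudoDiag]

private lemma measurableSet_pseudoDiag {X : Type*} [MeasurableSpace X] {c : ℕ → Set X}
    (hc : ∀ k, MeasurableSet (c k)) : MeasurableSet (pseudoDiag c) := by
  refine MeasurableSet.iInter fun k => ?_
  have : {q : X × X | q.1 ∈ c k ↔ q.2 ∈ c k} = (c k ×ˢ c k) ∪ ((c k)ᶜ ×ˢ (c k)ᶜ) := by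
    ext ⟨x, y⟩
    by_cases hx : x ∈ c k <;> by_cases hy : y ∈ c k <;> simp [hx, hy]
  rw [this]
  exact ((hc k).prod (hc k)).union (((hc k).compl).prod ((hc k).compl))

end PseudoDiag

private def fst2 {X₁ X₂ : Type*} (p : (X₁ × X₂) × (X₁ × X₂)) : X₁ × X₁ := (p.1.1, p.2.1)
private def snd2 {X₁ X₂ : Type*} (p : (X₁ × X₂) × (X₁ × X₂)) : X₂ × X₂ := (p.1.2, p.2.2)

private lemma measurable_fst2 {X₁ X₂ : Type*} [MeasurableSpace X₁] [MeasurableSpace X₂] :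
    Measurable (fst2 (X₁ := X₁) (X₂ := X₂)) :=
  (measurable_fst.comp measurable_fst).prodMk (measurable_fst.comp measurable_snd)

private lemma measurable_snd2 {X₁ X₂ : Type*} [MeasurableSpace X₁] [MeasurableSpace X₂] :
    Measurable (snd2 (X₁ := X₁) (X₂ := X₂)) :=
  (measurable_snd.comp measurable_fst).prodMk (measurable_snd.comp measurable_snd)

/-- If for `i = 1, 2` the actions of the projections of
`Γ ⊆ Aut(X₁,μ₁) × Aut(X₂,μ₂)` on the factors `(Xᵢ, μᵢ)` have the property (T)
relative to the space, then the diagonal action of `Γ` on the product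
probability space `(X₁ × X₂, μ₁ ⊗ μ₂)` has the property (T) relative to the
space. -/
theorem relPropertyT_prod_of_factors {Γ X₁ X₂ : Type*} [Group Γ]
    [MeasurableSpace X₁] [MeasurableSpace X₂]
    (μ₁ : Measure X₁) (μ₂ : Measure X₂)
    [IsProbabilityMeasure μ₁] [IsProbabilityMeasure μ₂]
    (act₁ : Γ → X₁ → X₁) (act₂ : Γ → X₂ → X₂)
    (hone₁ : ∀ x, act₁ 1 x = x) (hmul₁ : ∀ γ γ' x, act₁ (γ * γ') x = act₁ γ (act₁ γ' x))
    (hone₂ : ∀ x, act₂ 1 x = x) (hmul₂ : ∀ γ γ' x, act₂ (γ * γ') x = act₂ γ (act₂ γ' x))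
    (hmp₁ : ∀ γ, MeasurePreserving (act₁ γ) μ₁ μ₁)
    (hmp₂ : ∀ γ, MeasurePreserving (act₂ γ) μ₂ μ₂)
    (h₁ : HasRelPropertyT μ₁ act₁) (h₂ : HasRelPropertyT μ₂ act₂) :
    HasRelPropertyT (μ₁.prod μ₂)
      (fun γ (p : X₁ × X₂) => (act₁ γ p.1, act₂ γ p.2)) := by
  intro ν hprob hfst hsnd hweak hinv
  have hprod_fst : (μ₁.prod μ₂).map Prod.fst = μ₁ := Measure.fst_prod
  have hprod_snd : (μ₁.prod μ₂).map Prod.snd = μ₂ := Measure.snd_prod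
  -- marginals of the pushforward to X₁ × X₁
  have hκ₁fst : ∀ n, ((ν n).map fst2).map Prod.fst = μ₁ := by
    intro n
    rw [Measure.map_map measurable_fst measurable_fst2]
    rw [show (Prod.fst ∘ (fst2 : (X₁ × X₂) × (X₁ × X₂) → X₁ × X₁))
        = (Prod.fst ∘ (Prod.fst : (X₁ × X₂) × (X₁ × X₂) → X₁ × X₂)) from rfl]
    rw [← Measure.map_map measurable_fst measurable_fst, hfst n]
    exact hprod_fst
  have hκ₁snd : ∀ n, ((ν n).map fst2).map Prod.snd = μ₁ := by
    intro n
    rw [Measure.map_map measurable_snd measurable_fst2]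
    rw [show (Prod.snd ∘ (fst2 : (X₁ × X₂) × (X₁ × X₂) → X₁ × X₁))
        = (Prod.fst ∘ (Prod.snd : (X₁ × X₂) × (X₁ × X₂) → X₁ × X₂)) from rfl]
    rw [← Measure.map_map measurable_fst measurable_snd, hsnd n]
    exact hprod_fst
  have hκ₂fst : ∀ n, ((ν n).map snd2).map Prod.fst = μ₂ := by
    intro n
    rw [Measure.map_map measurable_fst measurable_snd2]
    rw [show (Prod.fst ∘ (snd2 : (X₁ × X₂) × (X₁ × X₂) → X₂ × X₂))
        = (Prod.snd ∘ (Prod.fst : (X₁ × X₂) × (X₁ × X₂) → X₁ × X₂)) from rfl]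
    rw [← Measure.map_map measurable_snd measurable_fst, hfst n]
    exact hprod_snd
  have hκ₂snd : ∀ n, ((ν n).map snd2).map Prod.snd = μ₂ := by
    intro n
    rw [Measure.map_map measurable_snd measurable_snd2]
    rw [show (Prod.snd ∘ (snd2 : (X₁ × X₂) × (X₁ × X₂) → X₂ × X₂))
        = (Prod.snd ∘ (Prod.snd : (X₁ × X₂) × (X₁ × X₂) → X₁ × X₂)) from rfl]
    rw [← Measure.map_map measurable_snd measurable_snd, hsnd n]
    exact hprod_snd
  -- apply h₁
  have hD1 : Tendsto (fun n => ((ν n).map fst2) {q : X₁ × X₁ | q.1 = q.2}) atTop (𝓝 1) := by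
    refine h₁ (fun n => (ν n).map fst2) (fun n => ?_) hκ₁fst hκ₁snd ?_ ?_
    · haveI := hprob n
      exact Measure.isProbabilityMeasure_map measurable_fst2.aemeasurable
    · intro φ ψ hφ hψ hφb hψb
      have hkey : (fun n => ∫ q : X₁ × X₁, φ q.1 * ψ q.2 ∂((ν n).map fst2))
          = fun n => ∫ p : (X₁ × X₂) × (X₁ × X₂), φ p.1.1 * ψ p.2.1 ∂(ν n) := by
        funext n
        exact integral_map measurable_fst2.aemeasurable
          (((hφ.comp measurable_fst).mul (hψ.comp measurable_snd)).aestronglyMeasurable)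
      rw [hkey]
      have hlim : ∫ x, φ x * ψ x ∂μ₁ = ∫ x : X₁ × X₂, φ x.1 * ψ x.1 ∂(μ₁.prod μ₂) := by
        conv_lhs => rw [← hprod_fst]
        exact integral_map measurable_fst.aemeasurable ((hφ.mul hψ).aestronglyMeasurable)
      rw [hlim]
      exact hweak (fun x => φ x.1) (fun x => ψ x.1) (hφ.comp measurable_fst)
        (hψ.comp measurable_fst) (hφb.imp fun C hC x => hC x.1)
        (hψb.imp fun C hC x => hC x.1)
    · intro γ
      exact inv_transfer measurable_fst2 (hinv γ)
        ((((hmp₁ γ).measurable.comp measurable_fst).prodMk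
            ((hmp₂ γ).measurable.comp measurable_snd)).comp measurable_fst |>.prodMk
          ((((hmp₁ γ).measurable.comp measurable_fst).prodMk
            ((hmp₂ γ).measurable.comp measurable_snd)).comp measurable_snd))
        (((hmp₁ γ).measurable.comp measurable_fst).prodMk
          ((hmp₁ γ).measurable.comp measurable_snd))
        (fun w => rfl)
  -- apply h₂
  have hD2 : Tendsto (fun n => ((ν n).map snd2) {q : X₂ × X₂ | q.1 = q.2}) atTop (𝓝 1) := by
    refine h₂ (fun n => (ν n).map snd2) (fun n => ?_) hκ₂fst hκ₂snd ?_ ?_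
    · haveI := hprob n
      exact Measure.isProbabilityMeasure_map measurable_snd2.aemeasurable
    · intro φ ψ hφ hψ hφb hψb
      have hkey : (fun n => ∫ q : X₂ × X₂, φ q.1 * ψ q.2 ∂((ν n).map snd2))
          = fun n => ∫ p : (X₁ × X₂) × (X₁ × X₂), φ p.1.2 * ψ p.2.2 ∂(ν n) := by
        funext n
        exact integral_map measurable_snd2.aemeasurable
          (((hφ.comp measurable_fst).mul (hψ.comp measurable_snd)).aestronglyMeasurable)
      rw [hkey]
      have hlim : ∫ x, φ x * ψ x ∂μ₂ = ∫ x : X₁ × X₂, φ x.2 * ψ x.2 ∂(μ₁.prod μ₂) := by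
        conv_lhs => rw [← hprod_snd]
        exact integral_map measurable_snd.aemeasurable ((hφ.mul hψ).aestronglyMeasurable)
      rw [hlim]
      exact hweak (fun x => φ x.2) (fun x => ψ x.2) (hφ.comp measurable_snd)
        (hψ.comp measurable_snd) (hφb.imp fun C hC x => hC x.2)
        (hψb.imp fun C hC x => hC x.2)
    · intro γ
      exact inv_transfer measurable_snd2 (hinv γ)
        ((((hmp₁ γ).measurable.comp measurable_fst).prodMk
            ((hmp₂ γ).measurable.comp measurable_snd)).comp measurable_fst |>.prodMk
          ((((hmp₁ γ).measurable.comp measurable_fst).prodMk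
            ((hmp₂ γ).measurable.comp measurable_snd)).comp measurable_snd))
        (((hmp₂ γ).measurable.comp measurable_fst).prodMk
          ((hmp₂ γ).measurable.comp measurable_snd))
        (fun w => rfl)
  -- extract countable separating families from measurable hulls of the diagonal
  choose a b ha hb hsep using fun n =>
    exists_sep (toMeasurable (ν n) {p : (X₁ × X₂) × (X₁ × X₂) | p.1 = p.2})
      (measurableSet_toMeasurable _ _)
  have hPD1meas : MeasurableSet (pseudoDiag fun k : ℕ => a k.unpair.1 k.unpair.2) :=
    measurableSet_pseudoDiag fun k => ha _ _
  have hPD2meas : MeasurableSet (pseudoDiag fun k : ℕ => b k.unpair.1 k.unpair.2) :=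
    measurableSet_pseudoDiag fun k => hb _ _
  have hsub : ∀ n, (fst2 ⁻¹' pseudoDiag (fun k : ℕ => a k.unpair.1 k.unpair.2)) ∩
      (snd2 ⁻¹' pseudoDiag (fun k : ℕ => b k.unpair.1 k.unpair.2)) ⊆
      toMeasurable (ν n) {p : (X₁ × X₂) × (X₁ × X₂) | p.1 = p.2} := by
    intro n p hp
    obtain ⟨h1, h2⟩ := hp
    have h1' : ∀ m, p.1.1 ∈ a n m ↔ p.2.1 ∈ a n m := by
      intro m
      have := mem_pseudoDiag.mp h1 (Nat.pair n m)
      simpa [fst2, Nat.unpair_pair] using this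
    have h2' : ∀ m, p.1.2 ∈ b n m ↔ p.2.2 ∈ b n m := by
      intro m
      have := mem_pseudoDiag.mp h2 (Nat.pair n m)
      simpa [snd2, Nat.unpair_pair] using this
    have hdiag : (p.1, p.1) ∈ toMeasurable (ν n) {p : (X₁ × X₂) × (X₁ × X₂) | p.1 = p.2} :=
      subset_toMeasurable _ _ rfl
    have := (hsep n p.1 p.2 h1' h2').mpr hdiag
    rwa [Prod.mk.eta] at this
  -- lower bounds on the measurable pseudo-diagonal preimages
  have hm1 : ∀ n, ((ν n).map fst2) {q : X₁ × X₁ | q.1 = q.2}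
      ≤ ν n (fst2 ⁻¹' pseudoDiag (fun k : ℕ => a k.unpair.1 k.unpair.2)) := by
    intro n
    rw [← Measure.map_apply measurable_fst2 hPD1meas]
    refine measure_mono fun q hq => ?_
    exact mem_pseudoDiag.mpr fun k => by rw [show q.1 = q.2 from hq]
  have hm2 : ∀ n, ((ν n).map snd2) {q : X₂ × X₂ | q.1 = q.2}
      ≤ ν n (snd2 ⁻¹' pseudoDiag (fun k : ℕ => b k.unpair.1 k.unpair.2)) := by
    intro n
    rw [← Measure.map_apply measurable_snd2 hPD2meas]
    refine measure_mono fun q hq => ?_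
    exact mem_pseudoDiag.mpr fun k => by rw [show q.1 = q.2 from hq]
  have ht1 : Tendsto (fun n =>
      ν n (fst2 ⁻¹' pseudoDiag (fun k : ℕ => a k.unpair.1 k.unpair.2))) atTop (𝓝 1) :=
    tendsto_of_tendsto_of_tendsto_of_le_of_le hD1 tendsto_const_nhds hm1
      (fun n => by haveI := hprob n; exact prob_le_one)
  have ht2 : Tendsto (fun n =>
      ν n (snd2 ⁻¹' pseudoDiag (fun k : ℕ => b k.unpair.1 k.unpair.2))) atTop (𝓝 1) :=
    tendsto_of_tendsto_of_tendsto_of_le_of_le hD2 tendsto_const_nhds hm2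
      (fun n => by haveI := hprob n; exact prob_le_one)
  have hlow : ∀ n, ν n (fst2 ⁻¹' pseudoDiag (fun k : ℕ => a k.unpair.1 k.unpair.2))
      + ν n (snd2 ⁻¹' pseudoDiag (fun k : ℕ => b k.unpair.1 k.unpair.2)) - 1
      ≤ ν n {p : (X₁ × X₂) × (X₁ × X₂) | p.1 = p.2} := by
    intro n
    haveI := hprob n
    rw [tsub_le_iff_right]
    calc ν n (fst2 ⁻¹' pseudoDiag (fun k : ℕ => a k.unpair.1 k.unpair.2))
        + ν n (snd2 ⁻¹' pseudoDiag (fun k : ℕ => b k.unpair.1 k.unpair.2))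
        = ν n ((fst2 ⁻¹' pseudoDiag (fun k : ℕ => a k.unpair.1 k.unpair.2))
            ∪ (snd2 ⁻¹' pseudoDiag (fun k : ℕ => b k.unpair.1 k.unpair.2)))
          + ν n ((fst2 ⁻¹' pseudoDiag (fun k : ℕ => a k.unpair.1 k.unpair.2))
            ∩ (snd2 ⁻¹' pseudoDiag (fun k : ℕ => b k.unpair.1 k.unpair.2))) :=
          (measure_union_add_inter _ (measurable_snd2 hPD2meas)).symm
      _ ≤ 1 + ν n ((fst2 ⁻¹' pseudoDiag (fun k : ℕ => a k.unpair.1 k.unpair.2))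
            ∩ (snd2 ⁻¹' pseudoDiag (fun k : ℕ => b k.unpair.1 k.unpair.2))) :=
          add_le_add_left prob_le_one _
      _ ≤ 1 + ν n (toMeasurable (ν n) {p : (X₁ × X₂) × (X₁ × X₂) | p.1 = p.2}) :=
          add_le_add_right (measure_mono (hsub n)) _
      _ = ν n {p : (X₁ × X₂) × (X₁ × X₂) | p.1 = p.2} + 1 := by
          rw [measure_toMeasurable]; exact add_comm _ _
  have hlowt : Tendsto (fun n =>
      ν n (fst2 ⁻¹' pseudoDiag (fun k : ℕ => a k.unpair.1 k.unpair.2))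
      + ν n (snd2 ⁻¹' pseudoDiag (fun k : ℕ => b k.unpair.1 k.unpair.2)) - 1)
      atTop (𝓝 1) := by
    have h2 := ENNReal.Tendsto.sub (ht1.add ht2)
      (tendsto_const_nhds (x := (1 : ENNReal))) (Or.inr ENNReal.one_ne_top)
    simpa [ENNReal.add_sub_cancel_right ENNReal.one_ne_top] using h2
  exact tendsto_of_tendsto_of_tendsto_of_le_of_le hlowt tendsto_const_nhds hlow
    (fun n => by haveI := hprob n; exact prob_le_one)
end

section
/- For any countable group Γ acting by measure-preserving transformations on an atomless standard probability space (X, μ), the diagonal action of Γ on the infinite product (∏_{i=1}^∞ X, μ^⊗ℕ) does not have the property (T) relative to the space. -/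
open MeasureTheory Filter Topology

section Aux

variable {Y : Type*} [MeasurableSpace Y]

/-- A finite-dimensional "box" event in an infinite product. -/
def NRTbox (s : Finset ℕ) (A : ℕ → Set Y) : Set (ℕ → Y) := ⋂ i ∈ s, (fun f => f i) ⁻¹' A i

omit [MeasurableSpace Y] in
lemma mem_NRTbox {s : Finset ℕ} {A : ℕ → Set Y} {f : ℕ → Y} :
    f ∈ NRTbox s A ↔ ∀ i ∈ s, f i ∈ A i := by simp [NRTbox]

/-- The collection of measurable boxes. -/
def NRTboxes (Y : Type*) [MeasurableSpace Y] : Set (Set (ℕ → Y)) :=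
  {t | ∃ s : Finset ℕ, ∃ A : ℕ → Set Y, (∀ i, MeasurableSet (A i)) ∧ t = NRTbox s A}

lemma NRTbox_measurableSet {s : Finset ℕ} {A : ℕ → Set Y} (hA : ∀ i, MeasurableSet (A i)) :
    MeasurableSet (NRTbox s A) :=
  MeasurableSet.biInter s.countable_toSet fun i _ => (measurable_pi_apply i) (hA i)

lemma isPiSystem_NRTboxes : IsPiSystem (NRTboxes Y) := by
  classical
  rintro t1 ⟨s1, A1, hA1, rfl⟩ t2 ⟨s2, A2, hA2, rfl⟩ -
  refine ⟨s1 ∪ s2, fun i =>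
    (if i ∈ s1 then A1 i else Set.univ) ∩ (if i ∈ s2 then A2 i else Set.univ), fun i => ?_, ?_⟩
  · refine MeasurableSet.inter ?_ ?_ <;> split_ifs <;>
      first | exact hA1 _ | exact hA2 _ | exact MeasurableSet.univ
  · ext f
    simp only [Set.mem_inter_iff, mem_NRTbox, Finset.mem_union]
    constructor
    · rintro ⟨h1, h2⟩ i hi
      constructor
      · split_ifs with h
        · exact h1 i h
        · exact Set.mem_univ _
      · split_ifs with h
        · exact h2 i h
        · exact Set.mem_univ _
    · intro h
      constructor <;> intro i hi
      · have := (h i (Or.inl hi)).1; rwa [if_pos hi] at this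
      · have := (h i (Or.inr hi)).2; rwa [if_pos hi] at this

lemma generateFrom_NRTboxes :
    MeasurableSpace.generateFrom (NRTboxes Y) = (inferInstance : MeasurableSpace (ℕ → Y)) := by
  refine le_antisymm ?_ ?_
  · rw [MeasurableSpace.generateFrom_le_iff]
    rintro t ⟨s, A, hA, rfl⟩
    exact NRTbox_measurableSet hA
  · show (⨆ i : ℕ, MeasurableSpace.comap (fun f : ℕ → Y => f i) inferInstance) ≤ _
    refine iSup_le fun i => ?_
    refine measurable_iff_comap_le.1 fun A hA => ?_
    refine MeasurableSpace.measurableSet_generateFrom ⟨{i}, fun _ => A, fun _ => hA, ?_⟩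
    ext f
    simp [NRTbox]

lemma NRT_ext {κ₁ κ₂ : Measure (ℕ → Y)} [IsProbabilityMeasure κ₁] [IsProbabilityMeasure κ₂]
    (h : ∀ (s : Finset ℕ) (A : ℕ → Set Y), (∀ i, MeasurableSet (A i)) →
      κ₁ (NRTbox s A) = κ₂ (NRTbox s A)) :
    κ₁ = κ₂ := by
  refine MeasureTheory.ext_of_generate_finite (NRTboxes Y) generateFrom_NRTboxes.symm
    isPiSystem_NRTboxes ?_ (by simp)
  rintro t ⟨s, A, hA, rfl⟩
  exact h s A hA

lemma NRT_fiber {α β : Type*} {mβ : MeasurableSpace β} {g : α → β} {h : α → ℝ}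
    (hh : @Measurable α ℝ (mβ.comap g) _ h) {x y : α} (hxy : g x = g y) : h x = h y := by
  obtain ⟨s, -, hs⟩ := MeasurableSpace.measurableSet_comap.1
    (hh (measurableSet_singleton (h x)))
  have hx' : x ∈ g ⁻¹' s := by rw [hs]; exact rfl
  have hy' : y ∈ g ⁻¹' s := by show g y ∈ s; rw [← hxy]; exact hx'
  have : y ∈ h ⁻¹' {h x} := by rw [← hs]; exact hy'
  simpa [eq_comm] using this

lemma NRT_integrable_of_bdd {α : Type*} [MeasurableSpace α] {κ : Measure α} [IsFiniteMeasure κ]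
    {f : α → ℝ} (hf : Measurable f) {C : ℝ} (hC : ∀ x, |f x| ≤ C) : Integrable f κ :=
  ⟨hf.aestronglyMeasurable,
    HasFiniteIntegral.of_bounded (C := C)
      (ae_of_all _ fun x => by simpa [Real.norm_eq_abs] using hC x)⟩

/-- The splice map: first `n` coordinates from the first component, the others from the second. -/
def NRTsp {Y : Type*} (n : ℕ) (p : (ℕ → Y) × (ℕ → Y)) : ℕ → Y :=
  fun i => if i < n then p.1 i else p.2 i

lemma NRTsp_measurable (n : ℕ) : Measurable (NRTsp (Y := Y) n) := by
  refine measurable_pi_lambda _ fun i => ?_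
  by_cases h : i < n
  · simpa [NRTsp, h, Function.comp_def] using ((measurable_pi_apply i).comp (measurable_fst : Measurable (Prod.fst : (ℕ → Y) × (ℕ → Y) → (ℕ → Y))))
  · simpa [NRTsp, h, Function.comp_def] using ((measurable_pi_apply i).comp (measurable_snd : Measurable (Prod.snd : (ℕ → Y) × (ℕ → Y) → (ℕ → Y))))

variable (μ : Measure Y) [IsProbabilityMeasure μ]
  (η : Measure (ℕ → Y)) [IsProbabilityMeasure η]
  (hη : ∀ s : Finset ℕ,
      η.map (fun f (i : s) => f (i : ℕ)) = Measure.pi (fun _ : s => μ))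

include hη in
lemma NRT_box_apply (s : Finset ℕ) (A : ℕ → Set Y) (hA : ∀ i, MeasurableSet (A i)) :
    η (NRTbox s A) = ∏ i ∈ s, μ (A i) := by
  have hres : Measurable (fun f : ℕ → Y => fun i : s => f (i : ℕ)) :=
    measurable_pi_lambda _ fun i => measurable_pi_apply _
  have hset : NRTbox s A
      = (fun f : ℕ → Y => fun i : s => f (i : ℕ)) ⁻¹' (Set.univ.pi fun i : s => A (i : ℕ)) := by
    ext f
    simp [mem_NRTbox, Set.mem_univ_pi, Subtype.forall]
  rw [hset, ← Measure.map_apply hres (MeasurableSet.univ_pi fun i : s => hA (i : ℕ)), hη s,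
    Measure.pi_pi]
  exact Finset.prod_coe_sort s fun i => μ (A i)

include hη in
lemma NRT_map_eval (i : ℕ) : η.map (fun f => f i) = μ := by
  refine Measure.ext fun A hA => ?_
  rw [Measure.map_apply (measurable_pi_apply i) hA]
  have hset : (fun f : ℕ → Y => f i) ⁻¹' A = NRTbox {i} (fun _ => A) := by
    ext f; simp [NRTbox]
  rw [hset, NRT_box_apply μ η hη {i} _ (fun _ => hA)]
  simp

include hη in
lemma NRT_map_splice (n : ℕ) : (η.prod η).map (NRTsp n) = η := by
  classical
  haveI : IsProbabilityMeasure ((η.prod η).map (NRTsp n)) :=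
    Measure.isProbabilityMeasure_map (NRTsp_measurable n).aemeasurable
  refine NRT_ext fun s A hA => ?_
  rw [Measure.map_apply (NRTsp_measurable n) (NRTbox_measurableSet hA)]
  have hset : NRTsp (Y := Y) n ⁻¹' NRTbox s A
      = (NRTbox (s.filter (· < n)) A) ×ˢ (NRTbox (s.filter fun i => ¬ i < n) A) := by
    ext p
    simp only [Set.mem_preimage, mem_NRTbox, Set.mem_prod, Finset.mem_filter, NRTsp]
    constructor
    · intro h
      refine ⟨fun i hi => ?_, fun i hi => ?_⟩
      · have := h i hi.1; rwa [if_pos hi.2] at this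
      · have := h i hi.1; rwa [if_neg hi.2] at this
    · rintro ⟨h1, h2⟩ i hi
      by_cases hin : i < n
      · rw [if_pos hin]; exact h1 i ⟨hi, hin⟩
      · rw [if_neg hin]; exact h2 i ⟨hi, hin⟩
  rw [hset, Measure.prod_prod, NRT_box_apply μ η hη _ _ hA, NRT_box_apply μ η hη _ _ hA,
    NRT_box_apply μ η hη _ _ hA, Finset.prod_filter_mul_prod_filter_not]

include hη in
lemma NRT_map_coord {T : Y → Y} (hT : MeasurePreserving T μ μ) :
    η.map (fun f i => T (f i)) = η := by
  have hm : Measurable fun (f : ℕ → Y) i => T (f i) :=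
    measurable_pi_lambda _ fun i => hT.measurable.comp (measurable_pi_apply i)
  haveI : IsProbabilityMeasure (η.map fun (f : ℕ → Y) i => T (f i)) :=
    Measure.isProbabilityMeasure_map hm.aemeasurable
  refine NRT_ext fun s A hA => ?_
  rw [Measure.map_apply hm (NRTbox_measurableSet hA)]
  have hset : (fun (f : ℕ → Y) i => T (f i)) ⁻¹' NRTbox s A = NRTbox s fun i => T ⁻¹' A i := by
    ext f; simp [mem_NRTbox]
  rw [hset, NRT_box_apply μ η hη _ _ (fun i => hT.measurable (hA i)),
    NRT_box_apply μ η hη _ _ hA]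
  exact Finset.prod_congr rfl fun i _ => hT.measure_preimage (hA i).nullMeasurableSet

end Aux

/-- The diagonal action of a countable group `Γ` on the infinite product
`(∏_{i ∈ ℕ} X, μ^{⊗ℕ})` of an atomless standard probability space `(X, μ)`
(the product measure `η` being characterized by its finite-dimensional
marginals) never has the property (T) relative to the space. -/
theorem not_relPropertyT_infinite_product {Γ X : Type*} [Group Γ] [Countable Γ]
    [MeasurableSpace X] [StandardBorelSpace X]
    (μ : Measure X) [IsProbabilityMeasure μ] [NullSingletonClass μ]
    (act : Γ → X → X)
    (hone : ∀ x, act 1 x = x) (hmul : ∀ γ γ' x, act (γ * γ') x = act γ (act γ' x))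
    (hmp : ∀ γ, MeasurePreserving (act γ) μ μ)
    (η : Measure (ℕ → X)) [IsProbabilityMeasure η]
    (hη : ∀ s : Finset ℕ,
      η.map (fun f (i : s) => f (i : ℕ)) = Measure.pi (fun _ : s => μ)) :
    ¬ HasRelPropertyT η (fun γ (f : ℕ → X) (i : ℕ) => act γ (f i)) := by
  intro hT
  classical
  set m : Measure ((ℕ → X) × (ℕ → X)) := η.prod η with hm
  have hTm : ∀ n, Measurable (fun p : (ℕ → X) × (ℕ → X) => (p.1, NRTsp n p)) :=
    fun n => measurable_fst.prodMk (NRTsp_measurable n)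
  set ν : ℕ → Measure ((ℕ → X) × (ℕ → X)) :=
    fun n => m.map fun p => (p.1, NRTsp n p) with hν
  have hνP : ∀ n, IsProbabilityMeasure (ν n) :=
    fun n => Measure.isProbabilityMeasure_map (hTm n).aemeasurable
  have hsp_map : ∀ n, m.map (NRTsp n) = η := fun n => NRT_map_splice μ η hη n
  have hfst_map : m.map Prod.fst = η := by
    rw [hm, Measure.map_fst_prod]; simp
  have hfst : ∀ n, (ν n).map Prod.fst = η := by
    intro n
    rw [hν, Measure.map_map measurable_fst (hTm n)]
    have h1 : (Prod.fst ∘ fun p : (ℕ → X) × (ℕ → X) => (p.1, NRTsp n p)) = Prod.fst := rfl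
    rw [h1, hfst_map]
  have hsnd : ∀ n, (ν n).map Prod.snd = η := by
    intro n
    rw [hν, Measure.map_map measurable_snd (hTm n)]
    have h1 : (Prod.snd ∘ fun p : (ℕ → X) × (ℕ → X) => (p.1, NRTsp n p)) = NRTsp n := rfl
    rw [h1, hsp_map]
  -- measurability of the diagonal action
  have hGm : ∀ γ : Γ, Measurable fun (f : ℕ → X) (i : ℕ) => act γ (f i) :=
    fun γ => measurable_pi_lambda _ fun i => (hmp γ).measurable.comp (measurable_pi_apply i)
  have hGmap : ∀ γ : Γ, η.map (fun (f : ℕ → X) (i : ℕ) => act γ (f i)) = η :=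
    fun γ => NRT_map_coord μ η hη (hmp γ)
  -- exact invariance
  have hinv : ∀ (γ : Γ) (n : ℕ),
      (ν n).map (Prod.map (fun (f : ℕ → X) (i : ℕ) => act γ (f i))
        (fun (f : ℕ → X) (i : ℕ) => act γ (f i))) = ν n := by
    intro γ n
    set G : (ℕ → X) → (ℕ → X) := fun f i => act γ (f i) with hG
    rw [hν, Measure.map_map ((hGm γ).prodMap (hGm γ)) (hTm n)]
    have hcomm : (Prod.map G G ∘ fun p : (ℕ → X) × (ℕ → X) => (p.1, NRTsp n p))
        = (fun p : (ℕ → X) × (ℕ → X) => (p.1, NRTsp n p)) ∘ Prod.map G G := by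
      funext p
      refine Prod.ext rfl ?_
      funext i
      show G (NRTsp n p) i = NRTsp n (G p.1, G p.2) i
      by_cases h : i < n <;> simp [NRTsp, hG, h]
    rw [hcomm, ← Measure.map_map (hTm n) ((hGm γ).prodMap (hGm γ))]
    have hmm : m.map (Prod.map G G) = m := by
      rw [hm, ← Measure.map_prod_map _ _ (hGm γ) (hGm γ), hGmap γ]
    rw [hmm]
  have hinvT : ∀ γ : Γ, Tendsto (fun n => ⨆ s : Set ((ℕ → X) × (ℕ → X)),
      ((ν n).map (Prod.map (fun (f : ℕ → X) (i : ℕ) => act γ (f i))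
          (fun (f : ℕ → X) (i : ℕ) => act γ (f i))) s - ν n s) +
        (ν n s - (ν n).map (Prod.map (fun (f : ℕ → X) (i : ℕ) => act γ (f i))
          (fun (f : ℕ → X) (i : ℕ) => act γ (f i))) s)) atTop (𝓝 0) := by
    intro γ
    have h1 : (fun n => ⨆ s : Set ((ℕ → X) × (ℕ → X)),
        ((ν n).map (Prod.map (fun (f : ℕ → X) (i : ℕ) => act γ (f i))
            (fun (f : ℕ → X) (i : ℕ) => act γ (f i))) s - ν n s) +
          (ν n s - (ν n).map (Prod.map (fun (f : ℕ → X) (i : ℕ) => act γ (f i))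
            (fun (f : ℕ → X) (i : ℕ) => act γ (f i))) s)) = fun _ => (0 : ENNReal) := by
      funext n
      rw [hinv γ n]
      simp
    rw [h1]
    exact tendsto_const_nhds
  -- weak convergence to the diagonal measure
  have hweak : ∀ φ ψ : (ℕ → X) → ℝ, Measurable φ → Measurable ψ →
      (∃ C, ∀ x, |φ x| ≤ C) → (∃ C, ∀ x, |ψ x| ≤ C) →
      Tendsto (fun n => ∫ p : (ℕ → X) × (ℕ → X), φ p.1 * ψ p.2 ∂(ν n)) atTop
        (𝓝 (∫ x, φ x * ψ x ∂η)) := by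
    intro φ ψ hφm hψm hφb hψb
    obtain ⟨Cφ, hCφ0⟩ := hφb
    obtain ⟨Cψ, hCψ⟩ := hψb
    set C : ℝ := max Cφ 1 with hCdef
    have hC1 : (1 : ℝ) ≤ C := le_max_right _ _
    have hC0 : (0 : ℝ) < C := lt_of_lt_of_le one_pos hC1
    have hCφ : ∀ x, |φ x| ≤ C := fun x => (hCφ0 x).trans (le_max_left _ _)
    -- the filtration of the first k coordinates
    have hrm : ∀ k : ℕ, Measurable (fun f : ℕ → X => fun i : Fin k => f (i : ℕ)) :=
      fun k => measurable_pi_lambda _ fun i => measurable_pi_apply _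
    set ℱ : Filtration ℕ (inferInstance : MeasurableSpace (ℕ → X)) :=
      { seq := fun k => MeasurableSpace.comap
          (fun f : ℕ → X => fun i : Fin k => f (i : ℕ)) inferInstance
        mono' := by
          intro k l hkl
          dsimp only
          have h1 : (fun f : ℕ → X => fun i : Fin k => f (i : ℕ)) =
              (fun (g : Fin l → X) (i : Fin k) => g (Fin.castLE hkl i)) ∘
                (fun f : ℕ → X => fun i : Fin l => f (i : ℕ)) := rfl
          rw [h1, ← MeasurableSpace.comap_comp]
          exact MeasurableSpace.comap_mono
            (measurable_iff_comap_le.1 (measurable_pi_lambda _ fun i => measurable_pi_apply _))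
        le' := fun k => measurable_iff_comap_le.1 (hrm k) } with hFdef
    have hsupF : (⨆ k, (ℱ k : MeasurableSpace (ℕ → X)))
        = (inferInstance : MeasurableSpace (ℕ → X)) := by
      refine le_antisymm (iSup_le fun k => ℱ.le k) ?_
      show (⨆ i : ℕ, MeasurableSpace.comap (fun f : ℕ → X => f i) inferInstance) ≤ _
      refine iSup_le fun i => ?_
      have h1 : (fun f : ℕ → X => f i) =
          (fun g : Fin (i + 1) → X => g ⟨i, Nat.lt_succ_self i⟩) ∘
            (fun f : ℕ → X => fun j : Fin (i + 1) => f (j : ℕ)) := rfl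
      rw [h1, ← MeasurableSpace.comap_comp]
      exact le_trans
        (MeasurableSpace.comap_mono (measurable_iff_comap_le.1 (measurable_pi_apply _)))
        (le_iSup (fun k => (ℱ k : MeasurableSpace (ℕ → X))) (i + 1))
    have hψInt : Integrable ψ η := NRT_integrable_of_bdd hψm hCψ
    have hψsm : StronglyMeasurable[⨆ k, (ℱ k : MeasurableSpace (ℕ → X))] ψ := by
      rw [hsupF]
      exact hψm.stronglyMeasurable
    have hLevy := hψInt.tendsto_eLpNorm_condExp hψsm
    rw [Metric.tendsto_atTop]
    intro ε hε
    have hδ : 0 < ε / (4 * C) := by positivity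
    have hev : ∀ᶠ k in atTop,
        eLpNorm (η[ψ|ℱ k] - ψ) 1 η < ENNReal.ofReal (ε / (4 * C)) :=
      hLevy (Iio_mem_nhds (ENNReal.ofReal_pos.2 hδ))
    obtain ⟨k, hk⟩ := hev.exists
    set ψ' : (ℕ → X) → ℝ := η[ψ|ℱ k] with hψ'def
    have hψ'sm : StronglyMeasurable[ℱ k] ψ' := stronglyMeasurable_condExp
    have hψ'm : Measurable ψ' := (hψ'sm.mono (ℱ.le k)).measurable
    have hψ'Int : Integrable ψ' η := integrable_condExp
    have hfib : ∀ (p : (ℕ → X) × (ℕ → X)) (n : ℕ), k ≤ n → ψ' (NRTsp n p) = ψ' p.1 := by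
      intro p n hkn
      refine NRT_fiber (g := fun f : ℕ → X => fun i : Fin k => f (i : ℕ))
        hψ'sm.measurable ?_
      funext i
      show (if (i : ℕ) < n then p.1 i else p.2 i) = p.1 i
      rw [if_pos (lt_of_lt_of_le i.2 hkn)]
    have hIbound : ∫ f, |ψ f - ψ' f| ∂η ≤ ε / (4 * C) := by
      have h1 : ∫ f, |ψ f - ψ' f| ∂η = ∫ f, ‖ψ' f - ψ f‖ ∂η := by
        refine integral_congr_ae (ae_of_all _ fun f => ?_)
        simp [Real.norm_eq_abs, abs_sub_comm (ψ f)]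
      rw [h1, integral_norm_eq_lintegral_enorm (f := fun f => ψ' f - ψ f) (hψ'm.sub hψm).aestronglyMeasurable,
        ← eLpNorm_one_eq_lintegral_enorm]
      have hk' : eLpNorm (fun f => ψ' f - ψ f) 1 η ≤ ENNReal.ofReal (ε / (4 * C)) := le_of_lt hk
      exact ENNReal.toReal_le_of_le_ofReal hδ.le hk'
    refine ⟨k, fun n hn => ?_⟩
    -- integrability facts over m
    have hIntsp : Integrable (fun p => ψ (NRTsp n p)) m :=
      NRT_integrable_of_bdd (hψm.comp (NRTsp_measurable n)) fun p => hCψ _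
    have hIntψ'sp : Integrable (fun p => ψ' (NRTsp n p)) m := by
      have h1 : Integrable ψ' (m.map (NRTsp n)) := by rw [hsp_map n]; exact hψ'Int
      exact (integrable_map_measure hψ'm.aestronglyMeasurable
        (NRTsp_measurable n).aemeasurable).1 h1
    have hIntψfst : Integrable (fun p : (ℕ → X) × (ℕ → X) => ψ p.1) m :=
      NRT_integrable_of_bdd (hψm.comp measurable_fst) fun p => hCψ _
    have hIntψ'fst : Integrable (fun p : (ℕ → X) × (ℕ → X) => ψ' p.1) m := by
      have h1 : Integrable ψ' (m.map Prod.fst) := by rw [hfst_map]; exact hψ'Int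
      exact (integrable_map_measure hψ'm.aestronglyMeasurable
        measurable_fst.aemeasurable).1 h1
    have hφfst_meas : AEStronglyMeasurable (fun p : (ℕ → X) × (ℕ → X) => φ p.1) m :=
      (hφm.comp measurable_fst).aestronglyMeasurable
    have hφfst_bdd : ∀ᵐ p : (ℕ → X) × (ℕ → X) ∂m, ‖φ p.1‖ ≤ C :=
      ae_of_all _ fun p => by simpa [Real.norm_eq_abs] using hCφ p.1
    have hIntA : Integrable (fun p => φ p.1 * ψ (NRTsp n p)) m :=
      hIntsp.bdd_mul hφfst_meas hφfst_bdd
    have hIntB : Integrable (fun p : (ℕ → X) × (ℕ → X) => φ p.1 * ψ p.1) m :=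
      hIntψfst.bdd_mul hφfst_meas hφfst_bdd
    have hIntd1 : Integrable (fun p => ψ (NRTsp n p) - ψ' (NRTsp n p)) m :=
      hIntsp.sub hIntψ'sp
    have hIntd2 : Integrable (fun p : (ℕ → X) × (ℕ → X) => ψ' p.1 - ψ p.1) m :=
      hIntψ'fst.sub hIntψfst
    have hIntg1 : Integrable (fun p => φ p.1 * (ψ (NRTsp n p) - ψ' (NRTsp n p))) m :=
      hIntd1.bdd_mul hφfst_meas hφfst_bdd
    have hIntg2 : Integrable (fun p : (ℕ → X) × (ℕ → X) => φ p.1 * (ψ' p.1 - ψ p.1)) m :=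
      hIntd2.bdd_mul hφfst_meas hφfst_bdd
    -- rewrite the two integrals over m
    have hmap_eq : ∫ p : (ℕ → X) × (ℕ → X), φ p.1 * ψ p.2 ∂(ν n)
        = ∫ p, φ p.1 * ψ (NRTsp n p) ∂m := by
      show ∫ p : (ℕ → X) × (ℕ → X), φ p.1 * ψ p.2
          ∂(m.map fun p : (ℕ → X) × (ℕ → X) => (p.1, NRTsp n p)) = _
      have hgm : Measurable fun p : (ℕ → X) × (ℕ → X) => φ p.1 * ψ p.2 :=
        (hφm.comp measurable_fst).mul (hψm.comp measurable_snd)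
      rw [integral_map (hTm n).aemeasurable hgm.aestronglyMeasurable]
    have hL_eq : ∫ x, φ x * ψ x ∂η = ∫ p : (ℕ → X) × (ℕ → X), φ p.1 * ψ p.1 ∂m := by
      rw [← hfst_map, integral_map measurable_fst.aemeasurable (f := fun x : ℕ → X => φ x * ψ x)
        ((hφm.mul hψm : Measurable fun x : ℕ → X => φ x * ψ x)).aestronglyMeasurable]
    -- split the difference
    have hsplit : (∫ p, φ p.1 * ψ (NRTsp n p) ∂m) - (∫ p : (ℕ → X) × (ℕ → X), φ p.1 * ψ p.1 ∂m)
        = (∫ p, φ p.1 * (ψ (NRTsp n p) - ψ' (NRTsp n p)) ∂m)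
          + (∫ p : (ℕ → X) × (ℕ → X), φ p.1 * (ψ' p.1 - ψ p.1) ∂m) := by
      rw [← integral_sub hIntA hIntB, ← integral_add hIntg1 hIntg2]
      refine integral_congr_ae (ae_of_all _ fun p => ?_)
      have h2 := hfib p n hn
      show φ p.1 * ψ (NRTsp n p) - φ p.1 * ψ p.1
          = φ p.1 * (ψ (NRTsp n p) - ψ' (NRTsp n p)) + φ p.1 * (ψ' p.1 - ψ p.1)
      rw [h2]; ring
    -- bounds
    have hmap1 : ∫ p, |ψ (NRTsp n p) - ψ' (NRTsp n p)| ∂m = ∫ f, |ψ f - ψ' f| ∂η := by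
      rw [← hsp_map n, integral_map (NRTsp_measurable n).aemeasurable (f := fun f : ℕ → X => |ψ f - ψ' f|)
        (((hψm.sub hψ'm).abs : Measurable fun f : ℕ → X => |ψ f - ψ' f|)).aestronglyMeasurable]
    have hmap2 : ∫ p : (ℕ → X) × (ℕ → X), |ψ' p.1 - ψ p.1| ∂m = ∫ f, |ψ f - ψ' f| ∂η := by
      have h1 : ∫ f, |ψ f - ψ' f| ∂η = ∫ f, |ψ' f - ψ f| ∂η :=
        integral_congr_ae (ae_of_all _ fun f => abs_sub_comm _ _)
      rw [h1, ← hfst_map, integral_map measurable_fst.aemeasurable (f := fun f : ℕ → X => |ψ' f - ψ f|)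
        (((hψ'm.sub hψm).abs : Measurable fun f : ℕ → X => |ψ' f - ψ f|)).aestronglyMeasurable]
    have hb1 : |∫ p, φ p.1 * (ψ (NRTsp n p) - ψ' (NRTsp n p)) ∂m| ≤ C * (ε / (4 * C)) := by
      have h2 : |∫ p, φ p.1 * (ψ (NRTsp n p) - ψ' (NRTsp n p)) ∂m|
          ≤ ∫ p, C * |ψ (NRTsp n p) - ψ' (NRTsp n p)| ∂m := by
        refine le_trans ?_ (integral_mono hIntg1.abs (hIntd1.abs.const_mul C) fun p => ?_)
        · simpa only [Real.norm_eq_abs] using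
            norm_integral_le_integral_norm (μ := m)
              (fun p => φ p.1 * (ψ (NRTsp n p) - ψ' (NRTsp n p)))
        · show |φ p.1 * (ψ (NRTsp n p) - ψ' (NRTsp n p))| ≤ C * |ψ (NRTsp n p) - ψ' (NRTsp n p)|
          rw [abs_mul]
          exact mul_le_mul_of_nonneg_right (hCφ _) (abs_nonneg _)
      rw [integral_const_mul, hmap1] at h2
      exact h2.trans (mul_le_mul_of_nonneg_left hIbound hC0.le)
    have hb2 : |∫ p : (ℕ → X) × (ℕ → X), φ p.1 * (ψ' p.1 - ψ p.1) ∂m| ≤ C * (ε / (4 * C)) := by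
      have h2 : |∫ p : (ℕ → X) × (ℕ → X), φ p.1 * (ψ' p.1 - ψ p.1) ∂m|
          ≤ ∫ p : (ℕ → X) × (ℕ → X), C * |ψ' p.1 - ψ p.1| ∂m := by
        refine le_trans ?_ (integral_mono hIntg2.abs (hIntd2.abs.const_mul C) fun p => ?_)
        · simpa only [Real.norm_eq_abs] using
            norm_integral_le_integral_norm (μ := m)
              (fun p : (ℕ → X) × (ℕ → X) => φ p.1 * (ψ' p.1 - ψ p.1))
        · show |φ p.1 * (ψ' p.1 - ψ p.1)| ≤ C * |ψ' p.1 - ψ p.1|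
          rw [abs_mul]
          exact mul_le_mul_of_nonneg_right (hCφ _) (abs_nonneg _)
      rw [integral_const_mul, hmap2] at h2
      exact h2.trans (mul_le_mul_of_nonneg_left hIbound hC0.le)
    -- conclude
    have hCne : C ≠ 0 := ne_of_gt hC0
    have hfinal : C * (ε / (4 * C)) = ε / 4 := by field_simp
    rw [Real.dist_eq, hmap_eq, hL_eq, hsplit]
    calc |(∫ p, φ p.1 * (ψ (NRTsp n p) - ψ' (NRTsp n p)) ∂m)
          + (∫ p : (ℕ → X) × (ℕ → X), φ p.1 * (ψ' p.1 - ψ p.1) ∂m)|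
        ≤ C * (ε / (4 * C)) + C * (ε / (4 * C)) := (abs_add_le _ _).trans (add_le_add hb1 hb2)
      _ = ε / 4 + ε / 4 := by rw [hfinal]
      _ < ε := by linarith
  -- the diagonal has measure zero for every n
  have hdiagX : MeasurableSet {q : X × X | q.1 = q.2} := by
    letI := upgradeStandardBorel X
    exact measurable_fst.stronglyMeasurable.measurableSet_eq_fun
      measurable_snd.stronglyMeasurable
  have hdiagPi : MeasurableSet {p : (ℕ → X) × (ℕ → X) | p.1 = p.2} := by
    have h1 : {p : (ℕ → X) × (ℕ → X) | p.1 = p.2}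
        = ⋂ i, (fun p : (ℕ → X) × (ℕ → X) => (p.1 i, p.2 i)) ⁻¹' {q : X × X | q.1 = q.2} := by
      ext p
      simp [funext_iff]
    rw [h1]
    exact MeasurableSet.iInter fun i =>
      (((measurable_pi_apply i).comp measurable_fst).prodMk
        ((measurable_pi_apply i).comp measurable_snd)) hdiagX
  have hprod_diag : (μ.prod μ) {q : X × X | q.1 = q.2} = 0 := by
    rw [Measure.prod_apply hdiagX]
    have h1 : ∀ x : X, (Prod.mk x ⁻¹' {q : X × X | q.1 = q.2}) = {x} := by
      intro x; ext y; simp [eq_comm]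
    simp [h1]
  have h0 : ∀ n, ν n {p : (ℕ → X) × (ℕ → X) | p.1 = p.2} = 0 := by
    intro n
    rw [hν, Measure.map_apply (hTm n) hdiagPi]
    refine le_antisymm ?_ zero_le
    have hmeasn : Measurable (fun p : (ℕ → X) × (ℕ → X) => (p.1 n, p.2 n)) :=
      ((measurable_pi_apply n).comp measurable_fst).prodMk
        ((measurable_pi_apply n).comp measurable_snd)
    have hsub : (fun p : (ℕ → X) × (ℕ → X) => (p.1, NRTsp n p)) ⁻¹'
          {p : (ℕ → X) × (ℕ → X) | p.1 = p.2}
        ⊆ (fun p : (ℕ → X) × (ℕ → X) => (p.1 n, p.2 n)) ⁻¹' {q : X × X | q.1 = q.2} := by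
      intro p hp
      have h2 : p.1 = NRTsp n p := hp
      have h3 := congrFun h2 n
      show p.1 n = p.2 n
      simpa [NRTsp, lt_irrefl] using h3
    refine le_trans (measure_mono hsub) (le_of_eq ?_)
    have hmapn : m.map (fun p : (ℕ → X) × (ℕ → X) => (p.1 n, p.2 n)) = μ.prod μ := by
      have h4 : (fun p : (ℕ → X) × (ℕ → X) => (p.1 n, p.2 n))
          = Prod.map (fun f : ℕ → X => f n) (fun f : ℕ → X => f n) := rfl
      rw [hm, h4, ← Measure.map_prod_map _ _ (measurable_pi_apply n) (measurable_pi_apply n),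
        NRT_map_eval μ η hη n]
    calc m ((fun p : (ℕ → X) × (ℕ → X) => (p.1 n, p.2 n)) ⁻¹' {q : X × X | q.1 = q.2})
        = (μ.prod μ) {q : X × X | q.1 = q.2} := by
          rw [← hmapn, Measure.map_apply hmeasn hdiagX]
      _ = 0 := hprod_diag
    -- done
  have hconc := hT ν hνP hfst hsnd hweak hinvT
  have h1 : (fun n => ν n {p : (ℕ → X) × (ℕ → X) | p.1 = p.2}) = fun _ => (0 : ENNReal) :=
    funext h0
  rw [h1] at hconc
  have h2 : (1 : ENNReal) = 0 := tendsto_nhds_unique hconc tendsto_const_nhds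
  exact one_ne_zero h2
end
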